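/- Let X be a finite-dimensional real Banach space and let f : X → X be piecewise affine and nonexpansive with respect to the norm on X. Suppose there are v, w ∈ X with f(v + tw) = v + (t + 1)w for all t ≥ 0. Define g(x) := f(x) − w for x ∈ X. Then for every x ∈ X there exists m ∈ ℕ such that f^{k+m}(x) = g^k(f^m(x)) + kw for all k ∈ ℕ. -/

import Mathlib

open Filter Topology
open Set

set_option maxHeartbeats 3000000 in
lemma deep_tube_commute
    {X : Type*} [NormedAddCommGroup X] [NormedSpace ℝ X]
    (f : X → X) (N : ℕ) (P : Fin N → Set X)
    (hcover : ∀ x : X, ∃ i, x ∈ P i)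
    (hclosed : ∀ i, IsClosed (P i)) (hconv : ∀ i, Convex ℝ (P i))
    (A : Fin N → (X →ₗ[ℝ] X)) (b : Fin N → X)
    (haff : ∀ i, ∀ x ∈ P i, f x = A i x + b i)
    (hf_nonexp : ∀ x y : X, ‖f x - f y‖ ≤ ‖x - y‖)
    (v w : X) (hline : ∀ t : ℝ, 0 ≤ t → f (v + t • w) = v + (t + 1) • w)
    (R : ℝ) (hR : 0 ≤ R) :
    ∃ T : ℝ, 0 ≤ T ∧ ∀ (z : X) (t s : ℝ), T ≤ t → 0 ≤ s →
      ‖z - (v + t • w)‖ ≤ R → f (z + s • w) = f z + s • w := by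
  classical
  have key : ∀ (p : X) (t : ℝ), 0 ≤ t → ‖p - (v + t • w)‖ ≤ R →
      ‖f p - (v + (t + 1) • w)‖ ≤ R := by
    intro p t ht hp
    calc ‖f p - (v + (t + 1) • w)‖ = ‖f p - f (v + t • w)‖ := by rw [hline t ht]
      _ ≤ ‖p - (v + t • w)‖ := hf_nonexp _ _
      _ ≤ R := hp
  set Seg : Fin N → ℝ → Prop := fun i t =>
    0 ≤ t ∧ ∃ (u : X) (l : ℝ), 0 < l ∧ ‖u‖ ≤ R ∧
      v + t • w + u ∈ P i ∧ v + t • w + u + l • w ∈ P i with hSeg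
  have claimE : ∀ i, (∀ C : ℝ, ∃ t, C ≤ t ∧ Seg i t) → A i w = w := by
    intro i h
    obtain ⟨t₁, -, ht₁0, u₁, l₁, hl₁, hu₁, hp, hz'⟩ := h 0
    set p := v + t₁ • w + u₁ with hpdef
    set z' := v + t₁ • w + u₁ + l₁ • w with hz'def
    have hfp : ‖f p - (v + (t₁ + 1) • w)‖ ≤ R := by
      apply key p t₁ ht₁0
      have : p - (v + t₁ • w) = u₁ := by rw [hpdef]; abel
      rw [this]; exact hu₁
    have main : ∀ s₀ : ℝ, 1 ≤ s₀ → ‖A i w - w‖ ≤ 4 * R / s₀ := by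
      intro s₀ hs₀
      obtain ⟨t₂, ht₂, ht₂0, u₂, l₂, hl₂, hu₂, hq, -⟩ := h (t₁ + s₀)
      set q := v + t₂ • w + u₂ with hqdef
      have hfq : ‖f q - (v + (t₂ + 1) • w)‖ ≤ R := by
        apply key q t₂ ht₂0
        have : q - (v + t₂ • w) = u₂ := by rw [hqdef]; abel
        rw [this]; exact hu₂
      set s : ℝ := t₂ - t₁ with hsdef
      have hs : s₀ ≤ s := by rw [hsdef]; linarith
      have hspos : 0 < s := by linarith
      have hAqp : A i (q - p) = f q - f p := by
        rw [map_sub, haff i q hq, haff i p hp]; abel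
      have h1 : ‖A i (q - p) - s • w‖ ≤ 2 * R := by
        have heq : A i (q - p) - s • w
            = (f q - (v + (t₂ + 1) • w)) - (f p - (v + (t₁ + 1) • w)) := by
          rw [hAqp, hsdef]; module
        rw [heq]
        calc ‖(f q - (v + (t₂ + 1) • w)) - (f p - (v + (t₁ + 1) • w))‖
            ≤ ‖f q - (v + (t₂ + 1) • w)‖ + ‖f p - (v + (t₁ + 1) • w)‖ := norm_sub_le _ _
          _ ≤ 2 * R := by linarith
      have hΔ : (q - p) - s • w = u₂ - u₁ := by
        rw [hqdef, hpdef, hsdef]; module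
      have h2 : ‖(q - p) - s • w‖ ≤ 2 * R := by
        rw [hΔ]
        calc ‖u₂ - u₁‖ ≤ ‖u₂‖ + ‖u₁‖ := norm_sub_le _ _
          _ ≤ 2 * R := by linarith
      set c : ℝ := 1 + s / l₁ with hcdef
      have hcpos : 0 < c := by positivity
      set a₁ : ℝ := 1 / c with ha₁
      set a₂ : ℝ := (s / l₁) / c with ha₂
      have ha₁pos : 0 ≤ a₁ := by positivity
      have ha₂pos : 0 ≤ a₂ := by positivity
      have hl₁' : l₁ ≠ 0 := ne_of_gt hl₁
      have hc' : c ≠ 0 := ne_of_gt hcpos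
      have hsum : a₁ + a₂ = 1 := by
        rw [ha₁, ha₂, ← add_div, hcdef]; field_simp
      set Xp := a₁ • q + a₂ • p with hXp
      set Yp := a₁ • p + a₂ • z' with hYp
      have hXpP : Xp ∈ P i := hconv i hq hp ha₁pos ha₂pos hsum
      have hYpP : Yp ∈ P i := hconv i hp hz' ha₁pos ha₂pos hsum
      have hXY : Xp - Yp = a₁ • ((q - p) - s • w) := by
        have haux : a₂ * l₁ = a₁ * s := by
          rw [ha₁, ha₂]; field_simp
        rw [hXp, hYp, hz'def, ← hpdef]
        have expand : a₁ • q + a₂ • p - (a₁ • p + a₂ • (p + l₁ • w))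
            = a₁ • (q - p) - (a₂ * l₁) • w := by module
        rw [expand, haux]; module
      have hAXY : A i (Xp - Yp) = f Xp - f Yp := by
        rw [map_sub, haff i Xp hXpP, haff i Yp hYpP]; abel
      have hca : c * a₁ = 1 := by rw [ha₁]; field_simp
      have h3 : ‖A i ((q - p) - s • w)‖ ≤ 2 * R := by
        have heq : A i ((q - p) - s • w) = c • (A i (Xp - Yp)) := by
          rw [hXY]
          rw [map_smul]
          rw [smul_smul, hca, one_smul]
        rw [heq, hAXY]
        calc ‖c • (f Xp - f Yp)‖ = c * ‖f Xp - f Yp‖ := by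
              rw [norm_smul, Real.norm_eq_abs, abs_of_pos hcpos]
          _ ≤ c * ‖Xp - Yp‖ := by
              have := hf_nonexp Xp Yp
              nlinarith [norm_nonneg (Xp - Yp)]
          _ = c * (a₁ * ‖(q - p) - s • w‖) := by
              rw [hXY, norm_smul, Real.norm_eq_abs, abs_of_nonneg ha₁pos]
          _ = ‖(q - p) - s • w‖ := by rw [← mul_assoc, hca, one_mul]
          _ ≤ 2 * R := h2
      have hkey : s • (A i w - w) = (A i (q - p) - s • w) - A i ((q - p) - s • w) := by
        have hexp : A i ((q - p) - s • w) = A i (q - p) - s • A i w := by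
          rw [map_sub, map_smul]
        rw [hexp]; module
      have hnorm : s * ‖A i w - w‖ ≤ 4 * R := by
        have habs : ‖s • (A i w - w)‖ = s * ‖A i w - w‖ := by
          rw [norm_smul, Real.norm_eq_abs, abs_of_pos hspos]
        rw [← habs, hkey]
        calc ‖(A i (q - p) - s • w) - A i ((q - p) - s • w)‖
            ≤ ‖A i (q - p) - s • w‖ + ‖A i ((q - p) - s • w)‖ := norm_sub_le _ _
          _ ≤ 4 * R := by linarith
      rw [le_div_iff₀ (by linarith : (0:ℝ) < s₀)]
      have hmul : ‖A i w - w‖ * s₀ ≤ ‖A i w - w‖ * s :=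
        mul_le_mul_of_nonneg_left hs (norm_nonneg _)
      have : ‖A i w - w‖ * s = s * ‖A i w - w‖ := mul_comm _ _
      linarith
    -- conclude A i w = w by contradiction
    by_contra hne
    have hd : 0 < ‖A i w - w‖ := by
      rw [norm_pos_iff, sub_ne_zero]; exact fun hh => hne hh
    set d := ‖A i w - w‖ with hddef
    set s₀ : ℝ := max 1 ((4 * R + 1) / d) with hs₀def
    have h1' : (1:ℝ) ≤ s₀ := le_max_left _ _
    have h2' : (4 * R + 1) / d ≤ s₀ := le_max_right _ _
    have hmain := main s₀ h1'
    have hs₀pos : 0 < s₀ := by linarith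
    rw [le_div_iff₀ hs₀pos] at hmain
    rw [div_le_iff₀ hd] at h2'
    nlinarith
  -- choose a uniform depth T beyond which all touched pieces fix w
  have hbdd : ∀ i, ∃ C : ℝ, ∀ t, C ≤ t → Seg i t → A i w = w := by
    intro i
    by_cases hiw : A i w = w
    · exact ⟨0, fun _ _ _ => hiw⟩
    · by_contra hnc
      push_neg at hnc
      refine hiw (claimE i (fun C₀ => ?_))
      obtain ⟨t, hCt, hseg, -⟩ := hnc C₀
      exact ⟨t, hCt, hseg⟩
  choose C hC using hbdd
  obtain ⟨T₀, hT₀⟩ : ∃ T₀ : ℝ, ∀ i, C i ≤ T₀ := Finite.exists_le C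
  refine ⟨max T₀ 0, le_max_right _ _, ?_⟩
  intro z t s hTt hs hz
  have ht0 : 0 ≤ t := le_trans (le_max_right _ _) hTt
  -- any piece containing a short forward segment from the deep tube fixes w
  have hAw : ∀ (i : Fin N) (r : ℝ), 0 ≤ r → z + r • w ∈ P i →
      (∃ l : ℝ, 0 < l ∧ z + (r + l) • w ∈ P i) → A i w = w := by
    intro i r hr hmem hex
    obtain ⟨l, hl, hmem2⟩ := hex
    apply hC i (t + r)
    · calc C i ≤ T₀ := hT₀ i
        _ ≤ max T₀ 0 := le_max_left _ _
        _ ≤ t := hTt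
        _ ≤ t + r := by linarith
    · refine ⟨by linarith, z - (v + t • w), l, hl, hz, ?_, ?_⟩
      · have he : v + (t + r) • w + (z - (v + t • w)) = z + r • w := by module
        rwa [he]
      · have he : v + (t + r) • w + (z - (v + t • w)) + l • w = z + (r + l) • w := by module
        rwa [he]
  -- continuity of f
  have hfc : Continuous f := by
    have hlip : LipschitzWith 1 f := by
      refine LipschitzWith.of_dist_le_mul (fun a b' => ?_)
      rw [dist_eq_norm, dist_eq_norm, NNReal.coe_one, one_mul]
      exact hf_nonexp a b'
    exact hlip.continuous
  -- the set where commutation holds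
  set S : Set ℝ := {r : ℝ | f (z + r • w) = f z + r • w} with hSdef
  have hcw : Continuous (fun r : ℝ => z + r • w) :=
    continuous_const.add (continuous_id.smul continuous_const)
  have hSclosed : IsClosed S := by
    apply isClosed_eq
    · exact hfc.comp hcw
    · exact continuous_const.add (continuous_id.smul continuous_const)
  have h0S : (0 : ℝ) ∈ S := by simp [hSdef]
  -- propagation to the right
  have hprop : ∀ r : ℝ, 0 ≤ r → r ∈ S →
      ∃ l : ℝ, 0 < l ∧ ∀ r' : ℝ, r ≤ r' → r' ≤ r + l → r' ∈ S := by
    intro r hr hrS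
    -- pigeonhole: some piece contains z + (r + 1/(n+1)) • w for infinitely many n
    obtain ⟨i, hi⟩ : ∃ i, {n : ℕ | z + (r + 1 / (n + 1)) • w ∈ P i}.Infinite := by
      by_contra hfin
      push_neg at hfin
      have hcov2 : (Set.univ : Set ℕ) ⊆ ⋃ i, {n : ℕ | z + (r + 1 / (n + 1)) • w ∈ P i} := by
        intro n _
        obtain ⟨i, hi⟩ := hcover (z + (r + 1 / (n + 1)) • w)
        exact Set.mem_iUnion.mpr ⟨i, hi⟩
      have hfin2 : (Set.univ : Set ℕ).Finite :=
        Set.Finite.subset (Set.finite_iUnion hfin) hcov2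
      exact Set.infinite_univ hfin2
    -- z + r • w ∈ P i by closedness
    have hmem : z + r • w ∈ P i := by
      have hseq : ∀ k : ℕ, ∃ n : ℕ, n ∈ {n : ℕ | z + (r + 1 / (n + 1)) • w ∈ P i} ∧ k ≤ n := by
        intro k
        obtain ⟨n, hn1, hn2⟩ := hi.exists_gt k
        exact ⟨n, hn1, le_of_lt hn2⟩
      choose φ hφ1 hφ2 using hseq
      have htend : Filter.Tendsto (fun k : ℕ => z + (r + 1 / (φ k + 1)) • w) Filter.atTop
          (nhds (z + r • w)) := by
        have h1 : Filter.Tendsto (fun k : ℕ => ((φ k : ℝ) + 1)) Filter.atTop Filter.atTop := by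
          apply Filter.tendsto_atTop_add_const_right
          exact tendsto_natCast_atTop_atTop.comp
            (Filter.tendsto_atTop_mono hφ2 Filter.tendsto_id)
        have h2 : Filter.Tendsto (fun k : ℕ => (1 : ℝ) / (φ k + 1)) Filter.atTop (nhds 0) :=
          Filter.Tendsto.div_atTop tendsto_const_nhds h1
        have h3 : Filter.Tendsto (fun k : ℕ => r + 1 / (φ k + 1)) Filter.atTop (nhds (r + 0)) :=
          tendsto_const_nhds.add h2
        rw [add_zero] at h3
        have h4 := (h3.smul_const w).const_add z
        simpa using h4
      exact (hclosed i).mem_of_tendsto htend (Filter.Eventually.of_forall (fun k => hφ1 k))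
    -- pick one concrete l
    obtain ⟨n₀, hn₀, -⟩ := hi.exists_gt 0
    set l : ℝ := 1 / (n₀ + 1) with hldef
    have hlpos : 0 < l := by positivity
    have hmem2 : z + (r + l) • w ∈ P i := hn₀
    have hiw : A i w = w := hAw i r hr hmem ⟨l, hlpos, hmem2⟩
    refine ⟨l, hlpos, fun r' hr1 hr2 => ?_⟩
    -- z + r' • w ∈ P i by convexity
    have hmem3 : z + r' • w ∈ P i := by
      rcases eq_or_lt_of_le hr1 with heq | hlt
      · rwa [← heq]
      · have hθ1 : 0 ≤ (r + l - r') / l := by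
          apply div_nonneg _ (le_of_lt hlpos); linarith
        have hθ2 : 0 ≤ (r' - r) / l := by
          apply div_nonneg _ (le_of_lt hlpos); linarith
        have hθsum : (r + l - r') / l + (r' - r) / l = 1 := by
          field_simp; ring
        have hcx := hconv i hmem hmem2 hθ1 hθ2 hθsum
        have hcomb : ((r + l - r') / l) • (z + r • w) + ((r' - r) / l) • (z + (r + l) • w)
            = z + r' • w := by
          have hl2 : l ≠ 0 := ne_of_gt hlpos
          rw [smul_add, smul_add, smul_smul, smul_smul]
          have e1 : (r + l - r') / l * r + (r' - r) / l * (r + l) = r' := by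
            field_simp; ring
          have e2 : ((r + l - r') / l) • z + ((r' - r) / l) • z = z := by
            rw [← add_smul, hθsum, one_smul]
          calc ((r + l - r') / l) • z + ((r + l - r') / l * r) • w
                + (((r' - r) / l) • z + ((r' - r) / l * (r + l)) • w)
              = (((r + l - r') / l) • z + ((r' - r) / l) • z)
                + (((r + l - r') / l * r) • w + ((r' - r) / l * (r + l)) • w) := by abel
            _ = z + r' • w := by rw [e2, ← add_smul, e1]
        rwa [hcomb] at hcx
    -- now compute f at z + r' • w using affineness on P i
    have hstep : f (z + r' • w) = f (z + r • w) + (r' - r) • w := by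
      rw [haff i _ hmem3, haff i _ hmem]
      have hlin : A i (z + r' • w) = A i (z + r • w) + (r' - r) • A i w := by
        have e1 : A i (z + r' • w) = A i z + r' • A i w := by rw [map_add, map_smul]
        have e2 : A i (z + r • w) = A i z + r • A i w := by rw [map_add, map_smul]
        rw [e1, e2]; module
      rw [hlin, hiw]; abel
    rw [hSdef]
    simp only [Set.mem_setOf_eq]
    rw [hstep, hrS]
    module
  -- continuous induction: Icc 0 s ⊆ S
  have hsub : Set.Icc (0:ℝ) s ⊆ S := by
    apply IsClosed.Icc_subset_of_forall_exists_gt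
    · exact hSclosed.inter isClosed_Icc
    · exact h0S
    · rintro r ⟨hrS, hr0, -⟩ y hy
      obtain ⟨l, hlpos, hl⟩ := hprop r hr0 hrS
      refine ⟨min (r + l) y,
        hl _ (le_min (by linarith) (le_of_lt hy)) (min_le_left _ _), ?_, min_le_right _ _⟩
      simp only [lt_min_iff]
      exact ⟨by linarith, hy⟩
  exact hsub ⟨hs, le_refl s⟩

/-- `f` is piecewise affine on the convex set `M`: `M` is covered by finitely many closed
convex sets, on (the intersection with `M` of) each of which `f` is affine. -/
def PiecewiseAffineOn {X : Type*} [NormedAddCommGroup X] [NormedSpace ℝ X]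
    (M : Set X) (f : X → X) : Prop :=
  ∃ (m : ℕ) (P : Fin m → Set X),
    M ⊆ ⋃ i, P i ∧
    (∀ i, IsClosed (P i) ∧ Convex ℝ (P i)) ∧
    (∀ i, ∃ (A : X →ₗ[ℝ] X) (b : X), ∀ x ∈ P i ∩ M, f x = A x + b)

/-- if a piecewise affine norm-nonexpansive map on a finite-dimensional Banach
space has an invariant half-line `f(v + tw) = v + (t+1)w` for `t ≥ 0`, and `g := f - w`, then
for every `x` there is `m` with `f^{k+m}(x) = g^k(f^m(x)) + k w` for all `k`. -/
theorem invariant_halfline_reduction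
    {X : Type*} [NormedAddCommGroup X] [NormedSpace ℝ X] [FiniteDimensional ℝ X]
    (f : X → X)
    (hf_pa : PiecewiseAffineOn (Set.univ : Set X) f)
    (hf_nonexp : ∀ x y : X, ‖f x - f y‖ ≤ ‖x - y‖)
    (v w : X) (hline : ∀ t : ℝ, 0 ≤ t → f (v + t • w) = v + (t + 1) • w) :
    ∀ x : X, ∃ m : ℕ, ∀ k : ℕ,
      f^[k + m] x = (fun z => f z - w)^[k] (f^[m] x) + (k : ℝ) • w := by
  obtain ⟨N, P, hcov, hcc, haff'⟩ := hf_pa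
  have hcover : ∀ x : X, ∃ i, x ∈ P i := by
    intro x
    have := hcov (Set.mem_univ x)
    exact Set.mem_iUnion.mp this
  choose A b hAb using haff'
  have haff : ∀ i, ∀ x ∈ P i, f x = A i x + b i := fun i x hx =>
    hAb i x ⟨hx, Set.mem_univ x⟩
  intro x
  set R := ‖x - v‖ with hR
  obtain ⟨T, hT0, hTcomm⟩ := deep_tube_commute f N P hcover
    (fun i => (hcc i).1) (fun i => (hcc i).2) A b haff hf_nonexp v w hline R (norm_nonneg _)
  refine ⟨⌈T⌉₊, ?_⟩
  set m : ℕ := ⌈T⌉₊ with hm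
  have hTm : T ≤ (m : ℝ) := Nat.le_ceil T
  -- orbit stays in the tube
  have horbit : ∀ n : ℕ, ‖f^[n] x - (v + (n : ℝ) • w)‖ ≤ R := by
    intro n
    induction n with
    | zero => simp [hR]
    | succ n ih =>
      rw [Function.iterate_succ_apply']
      have hline' : f (v + (n : ℝ) • w) = v + ((n : ℝ) + 1) • w := hline n (by positivity)
      have hcast : ((n + 1 : ℕ) : ℝ) = (n : ℝ) + 1 := by push_cast; ring
      rw [hcast]
      calc ‖f (f^[n] x) - (v + ((n : ℝ) + 1) • w)‖
          = ‖f (f^[n] x) - f (v + (n : ℝ) • w)‖ := by rw [hline']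
        _ ≤ ‖f^[n] x - (v + (n : ℝ) • w)‖ := hf_nonexp _ _
        _ ≤ R := ih
  intro k
  induction k with
  | zero => simp
  | succ k ih =>
    set g : X → X := fun z => f z - w with hg
    have hgk : g^[k] (f^[m] x) = f^[k + m] x - (k : ℝ) • w := by
      rw [ih]; abel
    set z : X := f^[k + m] x - (k : ℝ) • w with hz
    have hztube : ‖z - (v + (m : ℝ) • w)‖ ≤ R := by
      have := horbit (k + m)
      have heq : z - (v + (m : ℝ) • w) = f^[k + m] x - (v + ((k + m : ℕ) : ℝ) • w) := by
        rw [hz]; push_cast; module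
      rw [heq]; exact this
    have hcomm := hTcomm z (m : ℝ) (k : ℝ) hTm (by positivity) hztube
    have hzk : z + (k : ℝ) • w = f^[k + m] x := by rw [hz]; abel
    rw [hzk] at hcomm
    -- now assemble
    have hLHS : f^[k + 1 + m] x = f (f^[k + m] x) := by
      have : k + 1 + m = (k + m) + 1 := by ring
      rw [this, Function.iterate_succ_apply']
    rw [hLHS, hcomm, Function.iterate_succ_apply', hgk]
    show f z + (k : ℝ) • w = (f z - w) + ((k + 1 : ℕ) : ℝ) • w
    push_cast
    module
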